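/- If in addition 0 < α < 2/(nL), then the FRSD iterates satisfy, for every k ≥ 0, ‖x̂(k+1) − x*_vec‖ ≤ η ‖x̂(k) − x*_vec‖ + α nL ‖x(k) − x̂(k)‖_C + α v ṽ² √n κ₃ σ_R^k ‖∇f(x(k))‖, where η = max{|1 − nLα|, |1 − nμα|}. -/

import Mathlib

open Matrix Filter
open scoped Kronecker

noncomputable section

/-- Euclidean norm on `ι → ℝ`. -/
def eucNorm {ι : Type*} [Fintype ι] (z : ι → ℝ) : ℝ := Real.sqrt (∑ i, z i ^ 2)

/-- Spectral norm (operator 2-norm) of a square real matrix. -/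
def specNorm {ι : Type*} [Fintype ι] (A : Matrix ι ι ℝ) : ℝ :=
  sSup {c : ℝ | ∃ z : ι → ℝ, eucNorm z ≤ 1 ∧ c = eucNorm (A.mulVec z)}

/-- Matrix norm induced by a vector norm `N`: `sup_{z ≠ 0} N (A z) / N z`. -/
def opNorm {ι : Type*} [Fintype ι] (N : (ι → ℝ) → ℝ) (A : Matrix ι ι ℝ) : ℝ :=
  sSup {c : ℝ | ∃ z : ι → ℝ, z ≠ 0 ∧ c = N (A.mulVec z) / N z}

/-- `g` is the gradient of `f : ℝ^p → ℝ`. -/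
def IsGradient {p : ℕ} (f : (Fin p → ℝ) → ℝ) (g : (Fin p → ℝ) → Fin p → ℝ) : Prop :=
  ∀ x, HasFDerivAt f (∑ j, g x j • (ContinuousLinearMap.proj j : (Fin p → ℝ) →L[ℝ] ℝ)) x

/-- `R = R̄ ⊗ I_p`. -/
def RK (n p : ℕ) (Rb : Matrix (Fin n) (Fin n) ℝ) :
    Matrix (Fin n × Fin p) (Fin n × Fin p) ℝ :=
  Rb ⊗ₖ (1 : Matrix (Fin p) (Fin p) ℝ)

/-- `V_∞ = (1_n π^T) ⊗ I_p`. -/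
def VinfK (n p : ℕ) (π : Fin n → ℝ) :
    Matrix (Fin n × Fin p) (Fin n × Fin p) ℝ :=
  (Matrix.of (fun _ j => π j) : Matrix (Fin n) (Fin n) ℝ) ⊗ₖ (1 : Matrix (Fin p) (Fin p) ℝ)

/-- `V(k) = R̄^k ⊗ I_p`. -/
def VK (n p : ℕ) (Rb : Matrix (Fin n) (Fin n) ℝ) (k : ℕ) :
    Matrix (Fin n × Fin p) (Fin n × Fin p) ℝ :=
  (Rb ^ k) ⊗ₖ (1 : Matrix (Fin p) (Fin p) ℝ)

/-- `Ṽ(k)⁻¹ = diag(((R̄^k)_{11})⁻¹, …, ((R̄^k)_{nn})⁻¹) ⊗ I_p`. -/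
def VtinvK (n p : ℕ) (Rb : Matrix (Fin n) (Fin n) ℝ) (k : ℕ) :
    Matrix (Fin n × Fin p) (Fin n × Fin p) ℝ :=
  Matrix.diagonal (fun q => ((Rb ^ k) q.1 q.1)⁻¹)

/-- `∇f(z) = (∇f_1(z_1), …, ∇f_n(z_n))` block-wise. -/
def gradf {n p : ℕ} (g : Fin n → (Fin p → ℝ) → Fin p → ℝ) (z : Fin n × Fin p → ℝ) :
    Fin n × Fin p → ℝ :=
  fun q => g q.1 (fun j => z (q.1, j)) q.2

/-- `x*_vec = 1_n ⊗ x*`. -/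
def starVec (n p : ℕ) (xstar : Fin p → ℝ) : Fin n × Fin p → ℝ := fun q => xstar q.2

end

/- ========================= Auxiliary lemmas ========================= -/

noncomputable section

def ecast {ι : Type*} [Fintype ι] (z : ι → ℝ) : EuclideanSpace ℝ ι := WithLp.toLp 2 z

lemma eucNorm_eq_norm {ι : Type*} [Fintype ι] (z : ι → ℝ) : eucNorm z = ‖ecast z‖ := by
  simp [eucNorm, EuclideanSpace.norm_eq, ecast, Real.norm_eq_abs, sq_abs, WithLp.ofLp_toLp]

@[simp] lemma ecast_add {ι : Type*} [Fintype ι] (a b : ι → ℝ) :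
    ecast (a + b) = ecast a + ecast b := rfl
@[simp] lemma ecast_sub {ι : Type*} [Fintype ι] (a b : ι → ℝ) :
    ecast (a - b) = ecast a - ecast b := rfl
@[simp] lemma ecast_smul {ι : Type*} [Fintype ι] (c : ℝ) (a : ι → ℝ) :
    ecast (c • a) = c • ecast a := rfl
@[simp] lemma ecast_zero {ι : Type*} [Fintype ι] : ecast (0 : ι → ℝ) = 0 := rfl

lemma inner_ecast {ι : Type*} [Fintype ι] (a b : ι → ℝ) :
    (inner ℝ (ecast a) (ecast b) : ℝ) = ∑ i, a i * b i := by
  simp [ecast, PiLp.inner_apply, RCLike.inner_apply, mul_comm, WithLp.ofLp_toLp]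

def dt {ι : Type*} [Fintype ι] (u v : ι → ℝ) : ℝ := ∑ i, u i * v i

lemma dt_eq_inner {ι : Type*} [Fintype ι] (u v : ι → ℝ) :
    dt u v = (inner ℝ (ecast u) (ecast v) : ℝ) := (inner_ecast u v).symm

lemma dt_self {ι : Type*} [Fintype ι] (v : ι → ℝ) : dt v v = eucNorm v ^ 2 := by
  rw [dt_eq_inner, eucNorm_eq_norm, ← real_inner_self_eq_norm_sq]

lemma dt_comm {ι : Type*} [Fintype ι] (u v : ι → ℝ) : dt u v = dt v u := by
  simp [dt, mul_comm]

lemma dt_add_left {ι : Type*} [Fintype ι] (u u' v : ι → ℝ) :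
    dt (u + u') v = dt u v + dt u' v := by
  simp [dt, add_mul, Finset.sum_add_distrib]

lemma dt_sub_left {ι : Type*} [Fintype ι] (u u' v : ι → ℝ) :
    dt (u - u') v = dt u v - dt u' v := by
  simp [dt, sub_mul, Finset.sum_sub_distrib]

lemma dt_sub_right {ι : Type*} [Fintype ι] (u v v' : ι → ℝ) :
    dt u (v - v') = dt u v - dt u v' := by
  simp [dt, mul_sub, Finset.sum_sub_distrib]

lemma dt_add_right {ι : Type*} [Fintype ι] (u v v' : ι → ℝ) :
    dt u (v + v') = dt u v + dt u v' := by
  simp [dt, mul_add, Finset.sum_add_distrib]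

lemma dt_smul_left {ι : Type*} [Fintype ι] (c : ℝ) (u v : ι → ℝ) :
    dt (c • u) v = c * dt u v := by
  simp [dt, Finset.mul_sum, mul_assoc]

lemma dt_smul_right {ι : Type*} [Fintype ι] (c : ℝ) (u v : ι → ℝ) :
    dt u (c • v) = c * dt u v := by
  rw [dt_comm, dt_smul_left, dt_comm]

lemma eucNorm_nonneg {ι : Type*} [Fintype ι] (a : ι → ℝ) : 0 ≤ eucNorm a :=
  Real.sqrt_nonneg _

lemma eucNorm_smul {ι : Type*} [Fintype ι] (c : ℝ) (a : ι → ℝ) :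
    eucNorm (c • a) = |c| * eucNorm a := by
  rw [eucNorm_eq_norm, eucNorm_eq_norm]
  have : ecast (c • a) = c • ecast a := rfl
  rw [this, norm_smul, Real.norm_eq_abs]

lemma eucNorm_sub_comm {ι : Type*} [Fintype ι] (a b : ι → ℝ) :
    eucNorm (a - b) = eucNorm (b - a) := by
  rw [eucNorm_eq_norm, eucNorm_eq_norm, ecast_sub, ecast_sub, norm_sub_rev]

lemma eucNorm_add_le {ι : Type*} [Fintype ι] (a b : ι → ℝ) :
    eucNorm (a + b) ≤ eucNorm a + eucNorm b := by
  rw [eucNorm_eq_norm, eucNorm_eq_norm, eucNorm_eq_norm, ecast_add]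
  exact norm_add_le _ _

lemma sum_mul_le_eucNorm {ι : Type*} [Fintype ι] (a b : ι → ℝ) :
    ∑ i, a i * b i ≤ eucNorm a * eucNorm b := by
  rw [← inner_ecast, eucNorm_eq_norm, eucNorm_eq_norm]
  exact real_inner_le_norm _ _

lemma dt_le_eucNorm {ι : Type*} [Fintype ι] (a b : ι → ℝ) :
    dt a b ≤ eucNorm a * eucNorm b := sum_mul_le_eucNorm a b

lemma eucNorm_sq_add {ι : Type*} [Fintype ι] (a c : ι → ℝ) :
    eucNorm (a + c) ^ 2 = eucNorm a ^ 2 + 2 * dt a c + eucNorm c ^ 2 := by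
  rw [← dt_self, ← dt_self, ← dt_self, dt_add_left, dt_add_right, dt_add_right,
    dt_comm c a]
  ring

lemma eucNorm_sq_expand {ι : Type*} [Fintype ι] (a b : ι → ℝ) :
    eucNorm b ^ 2 = eucNorm a ^ 2 + 2 * dt a (b - a) + eucNorm (b - a) ^ 2 := by
  have h := eucNorm_sq_add a (b - a)
  have e : a + (b - a) = b := by abel
  rwa [e] at h

lemma dt_expand_sub_smul {ι : Type*} [Fintype ι] (u v : ι → ℝ) (c : ℝ) :
    eucNorm (u - c • v) ^ 2
      = eucNorm u ^ 2 - 2 * c * dt u v + c ^ 2 * eucNorm v ^ 2 := by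
  rw [← dt_self, ← dt_self, ← dt_self, dt_sub_left, dt_sub_right, dt_sub_right,
    dt_smul_left, dt_smul_right, dt_smul_left, dt_smul_right, dt_comm v u]
  ring

end
noncomputable section

lemma gradApply {p : ℕ} (c : Fin p → ℝ) (w : Fin p → ℝ) :
    (∑ j, c j • (ContinuousLinearMap.proj j : (Fin p → ℝ) →L[ℝ] ℝ)) w = ∑ j, c j * w j := by
  simp [ContinuousLinearMap.sum_apply]

lemma line_hasDerivAt {p : ℕ} (x d : Fin p → ℝ) (t : ℝ) :
    HasDerivAt (fun s : ℝ => x + s • d) d t := by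
  simpa using ((hasDerivAt_id t).smul_const d).const_add x

lemma comp_line_hasDerivAt {p : ℕ} (f : (Fin p → ℝ) → ℝ) (g : (Fin p → ℝ) → Fin p → ℝ)
    (hg : IsGradient f g) (x d : Fin p → ℝ) (t : ℝ) :
    HasDerivAt (fun s : ℝ => f (x + s • d)) (∑ j, g (x + t • d) j * d j) t := by
  have h := (hg (x + t • d)).comp_hasDerivAt t (line_hasDerivAt x d t)
  simpa [gradApply, Function.comp_def] using h

/-- Descent lemma. -/
lemma descent {p : ℕ} (f : (Fin p → ℝ) → ℝ) (g : (Fin p → ℝ) → Fin p → ℝ)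
    (hg : IsGradient f g) (L : ℝ)
    (hLip : ∀ x x', eucNorm (g x - g x') ≤ L * eucNorm (x - x')) (x y : Fin p → ℝ) :
    f y ≤ f x + (∑ j, g x j * (y j - x j)) + L / 2 * eucNorm (y - x) ^ 2 := by
  set d := y - x with hd
  set S := ∑ j, g x j * d j with hS
  set Q := eucNorm d ^ 2 with hQ
  set C := L / 2 * Q with hC
  set ψ := fun s : ℝ => f (x + s • d) - s * S - C * s ^ 2 with hψdef
  have hder : ∀ s : ℝ, HasDerivAt ψ ((∑ j, g (x + s • d) j * d j) - S - C * (2 * s)) s := by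
    intro s
    have h1 := comp_line_hasDerivAt f g hg x d s
    have h2 : HasDerivAt (fun s : ℝ => s * S) S s := by
      simpa using (hasDerivAt_id s).mul_const S
    have h3 : HasDerivAt (fun s : ℝ => C * s ^ 2) (C * (2 * s)) s := by
      simpa using (hasDerivAt_pow 2 s).const_mul C
    exact (h1.sub h2).sub h3
  have hmono : AntitoneOn ψ (Set.Icc (0:ℝ) 1) := by
    apply antitoneOn_of_deriv_nonpos (convex_Icc 0 1)
    · exact (Continuous.continuousOn (by
        rw [continuous_iff_continuousAt]; exact fun s => (hder s).continuousAt))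
    · intro s hs
      exact ((hder s).differentiableAt).differentiableWithinAt
    · intro s hs
      rw [interior_Icc] at hs
      rw [(hder s).deriv]
      have hb : (∑ j, g (x + s • d) j * d j) - S ≤ L * s * Q := by
        have e1 : (∑ j, g (x + s • d) j * d j) - S
            = ∑ j, (g (x + s • d) - g x) j * d j := by
          rw [hS, ← Finset.sum_sub_distrib]
          exact Finset.sum_congr rfl fun j _ => by simp [sub_mul]
        rw [e1]
        calc ∑ j, (g (x + s • d) - g x) j * d j
            ≤ eucNorm (g (x + s • d) - g x) * eucNorm d := sum_mul_le_eucNorm _ _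
          _ ≤ (L * eucNorm (x + s • d - x)) * eucNorm d := by
              apply mul_le_mul_of_nonneg_right (hLip _ _) (eucNorm_nonneg d)
          _ = L * s * Q := by
              have : x + s • d - x = s • d := by abel
              rw [this, eucNorm_smul, abs_of_pos hs.1, hQ]; ring
      have : C * (2 * s) = L * s * Q := by rw [hC]; ring
      linarith
  have h01 : ψ 1 ≤ ψ 0 := hmono (by norm_num) (by norm_num) zero_le_one
  have hy : x + (1:ℝ) • d = y := by simp [hd]
  simp only [hψdef, hy, one_mul, one_pow, mul_one, zero_smul, add_zero, zero_mul,
    sub_zero, zero_pow, mul_zero] at h01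
  have : S = ∑ j, g x j * (y j - x j) := by
    rw [hS]; exact Finset.sum_congr rfl fun j _ => by simp [hd]
  rw [this] at h01
  rw [hQ, hC] at *
  linarith [h01]

/-- Cocoercivity of a convex function with descent property. -/
lemma cocoercive {H : Type*} [NormedAddCommGroup H] [InnerProductSpace ℝ H]
    (h : H → ℝ) (G : H → H) (L' : ℝ) (hL' : 0 < L')
    (hconv : ∀ a b, h a + (inner ℝ (G a) (b - a) : ℝ) ≤ h b)
    (hdesc : ∀ a b, h b ≤ h a + (inner ℝ (G a) (b - a) : ℝ) + L' / 2 * ‖b - a‖ ^ 2) :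
    ∀ x y : H, (1 / L') * ‖G x - G y‖ ^ 2 ≤ (inner ℝ (G x - G y) (x - y) : ℝ) := by
  have half : ∀ x y : H,
      h y + (inner ℝ (G y) (x - y) : ℝ) + 1 / (2 * L') * ‖G x - G y‖ ^ 2 ≤ h x := by
    intro x y
    set u := G x - G y with hu
    set z := x - (1 / L') • u with hz
    have h1 := hconv y z
    have h2 := hdesc x z
    have hzx : z - x = -((1 / L') • u) := by rw [hz]; abel
    have e1 : (inner ℝ (G y) (z - y) : ℝ)
        = (inner ℝ (G y) (z - x) : ℝ) + (inner ℝ (G y) (x - y) : ℝ) := by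
      rw [← inner_add_right]; congr 1; abel
    have e2 : (inner ℝ (G x) (z - x) : ℝ) - (inner ℝ (G y) (z - x) : ℝ)
        = -(1 / L') * ‖u‖ ^ 2 := by
      rw [← inner_sub_left, ← hu, hzx, inner_neg_right, real_inner_smul_right,
        real_inner_self_eq_norm_sq]; ring
    have e3 : ‖z - x‖ ^ 2 = (1 / L') ^ 2 * ‖u‖ ^ 2 := by
      rw [hzx, norm_neg, norm_smul, Real.norm_eq_abs, mul_pow, sq_abs]
    rw [e3] at h2
    have e4 : L' / 2 * ((1 / L') ^ 2 * ‖u‖ ^ 2) = 1 / (2 * L') * ‖u‖ ^ 2 := by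
      field_simp
    have e5 : -(1 / L') * ‖u‖ ^ 2 + 1 / (2 * L') * ‖u‖ ^ 2 = -(1 / (2 * L')) * ‖u‖ ^ 2 := by
      field_simp; ring
    linarith [h1, h2, e1, e2, e4, e5]
  intro x y
  have h1 := half x y
  have h2 := half y x
  have e : ‖G y - G x‖ = ‖G x - G y‖ := norm_sub_rev _ _
  have e3 : (inner ℝ (G y) (x - y) : ℝ) + (inner ℝ (G x) (y - x) : ℝ)
      = -(inner ℝ (G x - G y) (x - y) : ℝ) := by
    have a1 : (y - x) = -(x - y) := by abel
    rw [inner_sub_left, a1, inner_neg_right]; ring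
  rw [e] at h2
  have e4 : 1 / (2 * L') * ‖G x - G y‖ ^ 2 + 1 / (2 * L') * ‖G x - G y‖ ^ 2
      = 1 / L' * ‖G x - G y‖ ^ 2 := by field_simp; ring
  linarith [h1, h2, e3, e4]

end
noncomputable section

def pcast {ι : Type*} [Fintype ι] (z : EuclideanSpace ℝ ι) : ι → ℝ := WithLp.ofLp z

@[simp] lemma ecast_pcast {ι : Type*} [Fintype ι] (a : EuclideanSpace ℝ ι) :
    ecast (pcast a) = a := rfl
@[simp] lemma pcast_ecast {ι : Type*} [Fintype ι] (a : ι → ℝ) :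
    pcast (ecast a) = a := rfl

lemma epsub {ι : Type*} [Fintype ι] (a b : EuclideanSpace ℝ ι) :
    ecast (pcast b - pcast a) = b - a := by rw [ecast_sub, ecast_pcast, ecast_pcast]

/-- The key combined strong-convexity/smoothness inequality. -/
lemma keyIneq {p : ℕ} (f : (Fin p → ℝ) → ℝ) (g : (Fin p → ℝ) → Fin p → ℝ)
    (hg : IsGradient f g) (μ L : ℝ) (hμ : 0 < μ) (hμL : μ ≤ L)
    (hLip : ∀ x x', eucNorm (g x - g x') ≤ L * eucNorm (x - x'))
    (hsc : ∀ x x',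
      f x + (∑ j, g x j * (x' j - x j)) + μ / 2 * eucNorm (x' - x) ^ 2 ≤ f x')
    (w z : Fin p → ℝ) :
    eucNorm (g w - g z) ^ 2 + μ * L * eucNorm (w - z) ^ 2
      ≤ (μ + L) * dt (g w - g z) (w - z) := by
  have hmono : ∀ a b : Fin p → ℝ, μ * eucNorm (a - b) ^ 2 ≤ dt (g a - g b) (a - b) := by
    intro a b
    have h1 : f a + dt (g a) (b - a) + μ / 2 * eucNorm (b - a) ^ 2 ≤ f b := hsc a b
    have h2 : f b + dt (g b) (a - b) + μ / 2 * eucNorm (a - b) ^ 2 ≤ f a := hsc b a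
    have e1 : dt (g a) (b - a) = -dt (g a) (a - b) := by
      rw [dt_sub_right, dt_sub_right]; ring
    have e2 : eucNorm (b - a) = eucNorm (a - b) := eucNorm_sub_comm _ _
    rw [dt_sub_left]
    rw [e1, e2] at h1
    linarith
  set d := g w - g z with hdd
  set e := w - z with hee
  have hlip : eucNorm d ≤ L * eucNorm e := hLip w z
  rcases eq_or_lt_of_le hμL with hEq | hLt
  · -- μ = L
    subst hEq
    have hm := hmono w z
    have hD2 : eucNorm d ^ 2 ≤ (μ * eucNorm e) ^ 2 := by
      have := eucNorm_nonneg d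
      nlinarith [hlip]
    nlinarith [hm, hD2]
  · -- μ < L
    set L' := L - μ with hL'
    have hL'pos : 0 < L' := by rw [hL']; linarith
    -- pi-level convexity and descent for h = f - μ/2‖·‖²
    have hconvP : ∀ a b : Fin p → ℝ,
        (f a - μ / 2 * eucNorm a ^ 2) + dt (g a - μ • a) (b - a)
          ≤ f b - μ / 2 * eucNorm b ^ 2 := by
      intro a b
      have hsc' : f a + dt (g a) (b - a) + μ / 2 * eucNorm (b - a) ^ 2 ≤ f b := hsc a b
      have hid := eucNorm_sq_expand a b
      have hid2 : μ * eucNorm b ^ 2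
          = μ * (eucNorm a ^ 2 + 2 * dt a (b - a) + eucNorm (b - a) ^ 2) := by rw [hid]
      rw [dt_sub_left, dt_smul_left]
      linarith [hid2]
    have hdescP : ∀ a b : Fin p → ℝ,
        f b - μ / 2 * eucNorm b ^ 2
          ≤ (f a - μ / 2 * eucNorm a ^ 2) + dt (g a - μ • a) (b - a)
            + L' / 2 * eucNorm (b - a) ^ 2 := by
      intro a b
      have hdes : f b ≤ f a + dt (g a) (b - a) + L / 2 * eucNorm (b - a) ^ 2 :=
        descent f g hg L hLip a b
      have hid := eucNorm_sq_expand a b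
      have hid2 : μ * eucNorm b ^ 2
          = μ * (eucNorm a ^ 2 + 2 * dt a (b - a) + eucNorm (b - a) ^ 2) := by rw [hid]
      rw [dt_sub_left, dt_smul_left, hL']
      linarith [hid2]
    set H := EuclideanSpace ℝ (Fin p)
    set h : H → ℝ := fun a => f (pcast a) - μ / 2 * eucNorm (pcast a) ^ 2 with hh
    set G : H → H := fun a => ecast (g (pcast a) - μ • pcast a) with hG
    have hinner : ∀ a b : H, (inner ℝ (G a) (b - a) : ℝ)
        = dt (g (pcast a) - μ • pcast a) (pcast b - pcast a) := by
      intro a b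
      rw [dt_eq_inner, epsub]
    have hnorm : ∀ a b : H, ‖b - a‖ = eucNorm (pcast b - pcast a) := by
      intro a b
      rw [eucNorm_eq_norm, epsub]
    have hconv : ∀ a b : H, h a + (inner ℝ (G a) (b - a) : ℝ) ≤ h b := by
      intro a b
      rw [hh, hinner a b]
      exact hconvP (pcast a) (pcast b)
    have hdesc : ∀ a b : H,
        h b ≤ h a + (inner ℝ (G a) (b - a) : ℝ) + L' / 2 * ‖b - a‖ ^ 2 := by
      intro a b
      rw [hh, hinner a b, hnorm a b]
      exact hdescP (pcast a) (pcast b)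
    have hco := cocoercive h G L' hL'pos hconv hdesc (ecast w) (ecast z)
    have eG : G (ecast w) - G (ecast z) = ecast (d - μ • e) := by
      have e1 : G (ecast w) = ecast (g w - μ • w) := by rw [hG]; simp
      have e2 : G (ecast z) = ecast (g z - μ • z) := by rw [hG]; simp
      have epi : (g w - μ • w) - (g z - μ • z) = d - μ • e := by
        funext j
        simp only [hdd, hee, Pi.sub_apply, Pi.smul_apply, smul_eq_mul]
        ring
      rw [e1, e2, ← ecast_sub, epi]
    have eWZ : (ecast w - ecast z : H) = ecast e := by rw [← ecast_sub]
    rw [eG, eWZ] at hco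
    have hco' : (1 / L') * eucNorm (d - μ • e) ^ 2 ≤ dt (d - μ • e) e := by
      rw [dt_eq_inner, eucNorm_eq_norm]
      exact hco
    have hexp : eucNorm (d - μ • e) ^ 2
        = eucNorm d ^ 2 - 2 * μ * dt d e + μ ^ 2 * eucNorm e ^ 2 :=
      dt_expand_sub_smul d e μ
    have hdte : dt (d - μ • e) e = dt d e - μ * eucNorm e ^ 2 := by
      rw [dt_sub_left, dt_smul_left, dt_self]
    rw [hexp, hdte] at hco'
    have hmul : eucNorm d ^ 2 - 2 * μ * dt d e + μ ^ 2 * eucNorm e ^ 2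
        ≤ L' * (dt d e - μ * eucNorm e ^ 2) := by
      have h0 := hco'
      rw [div_mul_eq_mul_div, one_mul, div_le_iff₀ hL'pos] at h0
      linarith [h0]
    rw [hL'] at hmul
    nlinarith [hmul]

end
noncomputable section

lemma eucNorm_sq {ι : Type*} [Fintype ι] (v : ι → ℝ) :
    eucNorm v ^ 2 = ∑ i, v i ^ 2 := Real.sq_sqrt (by positivity)

lemma dt_sum_left {ι κ : Type*} [Fintype ι] [Fintype κ] (u : κ → ι → ℝ) (v : ι → ℝ) :
    dt (∑ i, u i) v = ∑ i, dt (u i) v := by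
  simp only [dt, Finset.sum_apply, Finset.sum_mul]
  exact Finset.sum_comm

/-- At a global minimizer of `∑ fᵢ`, the sum of the gradients vanishes. -/
lemma grad_sum_zero {n p : ℕ} (f : Fin n → (Fin p → ℝ) → ℝ)
    (g : Fin n → (Fin p → ℝ) → Fin p → ℝ)
    (hgrad : ∀ i, IsGradient (f i) (g i)) (xstar : Fin p → ℝ)
    (hmin : ∀ w, ∑ i, f i xstar ≤ ∑ i, f i w) :
    ∀ m, ∑ i, g i xstar m = 0 := by
  have hF : HasFDerivAt (fun w => ∑ i, f i w)
      (∑ i, ∑ j, g i xstar j • (ContinuousLinearMap.proj j : (Fin p → ℝ) →L[ℝ] ℝ))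
      xstar := by
      have h := HasFDerivAt.sum (u := Finset.univ) (fun i _ => hgrad i xstar)
      rwa [Finset.sum_fn] at h
  have hloc : IsLocalMin (fun w => ∑ i, f i w) xstar :=
    Filter.Eventually.of_forall hmin
  have hzero := hloc.hasFDerivAt_eq_zero hF
  intro m
  have := congrArg (fun T : (Fin p → ℝ) →L[ℝ] ℝ => T (Pi.single m 1)) hzero
  simpa [ContinuousLinearMap.sum_apply, Pi.single_apply, mul_ite,
    Finset.sum_ite_eq'] using this

/-- Scalar-level contraction estimate. -/
lemma quadContract (mm MM α η E D s T : ℝ) (hm0 : 0 < mm) (hM0 : 0 < MM)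
    (hmMle : mm ≤ MM) (hE : 0 ≤ E) (hD : 0 ≤ D) (hT0 : 0 ≤ T)
    (hA : D ^ 2 + mm * MM * E ^ 2 ≤ (mm + MM) * s) (hB : s ≤ D * E)
    (hα0 : 0 < α) (hηm : |1 - α * mm| ≤ η) (hηM : |1 - α * MM| ≤ η)
    (hT : T ^ 2 = E ^ 2 - 2 * α * s + α ^ 2 * D ^ 2) : T ≤ η * E := by
  have hmMpos : (0:ℝ) < mm + MM := by linarith
  have hq : (D - mm * E) * (D - MM * E) ≤ 0 := by
    have hBs := mul_le_mul_of_nonneg_left hB hmMpos.le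
    nlinarith [hA, hBs]
  have hmME : mm * E ≤ MM * E := mul_le_mul_of_nonneg_right hmMle hE
  have hDm : mm * E ≤ D := by nlinarith [hq, hmME]
  have hDM : D ≤ MM * E := by nlinarith [hq, hmME]
  have hηnn : 0 ≤ η := le_trans (abs_nonneg _) hηm
  have hkey : T ^ 2 ≤ η ^ 2 * E ^ 2 := by
    have h0 : 2 * α * (D ^ 2 + mm * MM * E ^ 2) ≤ 2 * α * ((mm + MM) * s) :=
      mul_le_mul_of_nonneg_left hA (by linarith : (0:ℝ) ≤ 2 * α)
    have h1 : (mm + MM) * T ^ 2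
        ≤ (mm + MM) * E ^ 2 - 2 * α * mm * MM * E ^ 2
          + (α ^ 2 * (mm + MM) - 2 * α) * D ^ 2 := by
      rw [hT]; linarith [h0]
    rcases le_or_gt (α * (mm + MM)) 2 with hc | hc
    · have hcoef : α ^ 2 * (mm + MM) - 2 * α ≤ 0 := by
        have := mul_le_mul_of_nonneg_left hc hα0.le
        linarith [this]
      have hD2 : mm ^ 2 * E ^ 2 ≤ D ^ 2 := by
        nlinarith [hDm, mul_nonneg hm0.le hE]
      have h2 : (α ^ 2 * (mm + MM) - 2 * α) * D ^ 2
          ≤ (α ^ 2 * (mm + MM) - 2 * α) * (mm ^ 2 * E ^ 2) :=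
        mul_le_mul_of_nonpos_left hD2 hcoef
      have hid : (mm + MM) * E ^ 2 - 2 * α * mm * MM * E ^ 2
          + (α ^ 2 * (mm + MM) - 2 * α) * (mm ^ 2 * E ^ 2)
          = (mm + MM) * ((1 - α * mm) ^ 2 * E ^ 2) := by ring
      have h4 : T ^ 2 ≤ (1 - α * mm) ^ 2 * E ^ 2 :=
        le_of_mul_le_mul_left (by linarith [h1, h2, hid]) hmMpos
      have h5 : (1 - α * mm) ^ 2 ≤ η ^ 2 := by
        rw [← sq_abs (1 - α * mm)]
        exact pow_le_pow_left₀ (abs_nonneg _) hηm 2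
      have h6 := mul_le_mul_of_nonneg_right h5 (sq_nonneg E)
      linarith [h4, h6]
    · have hcoef : 0 ≤ α ^ 2 * (mm + MM) - 2 * α := by
        have := mul_le_mul_of_nonneg_left hc.le hα0.le
        linarith [this]
      have hD2 : D ^ 2 ≤ MM ^ 2 * E ^ 2 := by
        nlinarith [hDM, hD]
      have h2 : (α ^ 2 * (mm + MM) - 2 * α) * D ^ 2
          ≤ (α ^ 2 * (mm + MM) - 2 * α) * (MM ^ 2 * E ^ 2) :=
        mul_le_mul_of_nonneg_left hD2 hcoef
      have hid : (mm + MM) * E ^ 2 - 2 * α * mm * MM * E ^ 2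
          + (α ^ 2 * (mm + MM) - 2 * α) * (MM ^ 2 * E ^ 2)
          = (mm + MM) * ((1 - α * MM) ^ 2 * E ^ 2) := by ring
      have h4 : T ^ 2 ≤ (1 - α * MM) ^ 2 * E ^ 2 :=
        le_of_mul_le_mul_left (by linarith [h1, h2, hid]) hmMpos
      have h5 : (1 - α * MM) ^ 2 ≤ η ^ 2 := by
        rw [← sq_abs (1 - α * MM)]
        exact pow_le_pow_left₀ (abs_nonneg _) hηM 2
      have h6 := mul_le_mul_of_nonneg_right h5 (sq_nonneg E)
      linarith [h4, h6]
  have h6 : T ^ 2 ≤ (η * E) ^ 2 := by rw [mul_pow]; exact hkey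
  have h7 := Real.sqrt_le_sqrt h6
  rwa [Real.sqrt_sq hT0, Real.sqrt_sq (by positivity)] at h7

/-- Contraction of the centralized gradient step. -/
lemma contraction {n p : ℕ} (hn : 1 ≤ n)
    (f : Fin n → (Fin p → ℝ) → ℝ) (g : Fin n → (Fin p → ℝ) → Fin p → ℝ)
    (μ L : ℝ) (hμ : 0 < μ) (hμL : μ ≤ L)
    (hgrad : ∀ i, IsGradient (f i) (g i))
    (hLip : ∀ i x x', eucNorm (g i x - g i x') ≤ L * eucNorm (x - x'))
    (hsc : ∀ i x x',
      f i x + (∑ j, g i x j * (x' j - x j)) + μ / 2 * eucNorm (x' - x) ^ 2 ≤ f i x')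
    (xstar : Fin p → ℝ) (hGz : ∀ m, ∑ i, g i xstar m = 0)
    (α η : ℝ) (hα0 : 0 < α)
    (hη : η = max |1 - n * L * α| |1 - n * μ * α|) (w : Fin p → ℝ) :
    eucNorm (w - xstar - α • (fun m => ∑ i, g i w m)) ≤ η * eucNorm (w - xstar) := by
  have hnpos : (0:ℝ) < n := by
    have : (1:ℝ) ≤ n := by exact_mod_cast hn
    linarith
  have hGsum : (fun m => ∑ i, g i w m) = ∑ i, (g i w - g i xstar) := by
    funext m
    simp only [Finset.sum_apply, Pi.sub_apply, Finset.sum_sub_distrib, hGz m, sub_zero]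
  -- step A
  have hA : ((n:ℝ) * μ + n * L) * dt (fun m => ∑ i, g i w m) (w - xstar)
      ≥ eucNorm (fun m => ∑ i, g i w m) ^ 2
        + ((n:ℝ) * μ) * ((n:ℝ) * L) * eucNorm (w - xstar) ^ 2 := by
    have hper : ∀ i : Fin n,
        eucNorm (g i w - g i xstar) ^ 2 + μ * L * eucNorm (w - xstar) ^ 2
          ≤ (μ + L) * dt (g i w - g i xstar) (w - xstar) :=
      fun i => keyIneq (f i) (g i) (hgrad i) μ L hμ hμL (hLip i) (hsc i) w xstar
    have hsumed := Finset.sum_le_sum (fun i (_ : i ∈ Finset.univ) => hper i)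
    rw [Finset.sum_add_distrib, Finset.sum_const, Finset.card_univ, Fintype.card_fin,
      ← Finset.mul_sum, nsmul_eq_mul] at hsumed
    have hdt : ∑ i, dt (g i w - g i xstar) (w - xstar)
        = dt (fun m => ∑ i, g i w m) (w - xstar) := by
      rw [hGsum, dt_sum_left]
    rw [hdt] at hsumed
    have hDsq : eucNorm (fun m => ∑ i, g i w m) ^ 2
        ≤ n * ∑ i, eucNorm (g i w - g i xstar) ^ 2 := by
      rw [hGsum, eucNorm_sq]
      have hterm : ∀ j : Fin p,
          ((∑ i, (g i w - g i xstar)) j) ^ 2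
            ≤ n * ∑ i, ((g i w - g i xstar) j) ^ 2 := by
        intro j
        rw [Finset.sum_apply]
        have := sq_sum_le_card_mul_sum_sq
          (s := (Finset.univ : Finset (Fin n))) (f := fun i => (g i w - g i xstar) j)
        simpa [Finset.card_univ] using this
      calc ∑ j, ((∑ i, (g i w - g i xstar)) j) ^ 2
          ≤ ∑ j : Fin p, ((n:ℝ) * ∑ i, ((g i w - g i xstar) j) ^ 2) :=
            Finset.sum_le_sum (fun j _ => hterm j)
        _ = n * ∑ i, eucNorm (g i w - g i xstar) ^ 2 := by
            rw [← Finset.mul_sum]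
            congr 1
            rw [Finset.sum_comm]
            exact Finset.sum_congr rfl fun i _ => (eucNorm_sq _).symm
    have hn_sumed := mul_le_mul_of_nonneg_left hsumed hnpos.le
    nlinarith [hn_sumed, hDsq]
  have hB : dt (fun m => ∑ i, g i w m) (w - xstar)
      ≤ eucNorm (fun m => ∑ i, g i w m) * eucNorm (w - xstar) := dt_le_eucNorm _ _
  have hT : eucNorm (w - xstar - α • (fun m => ∑ i, g i w m)) ^ 2
      = eucNorm (w - xstar) ^ 2 - 2 * α * dt (fun m => ∑ i, g i w m) (w - xstar)
        + α ^ 2 * eucNorm (fun m => ∑ i, g i w m) ^ 2 := by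
    rw [dt_expand_sub_smul, dt_comm]
  have hηm : |1 - α * ((n:ℝ) * μ)| ≤ η := by
    rw [hη]
    have e1 : 1 - α * ((n:ℝ) * μ) = 1 - n * μ * α := by ring
    rw [e1]
    exact le_max_right _ _
  have hηM : |1 - α * ((n:ℝ) * L)| ≤ η := by
    rw [hη]
    have e1 : 1 - α * ((n:ℝ) * L) = 1 - n * L * α := by ring
    rw [e1]
    exact le_max_left _ _
  exact quadContract ((n:ℝ) * μ) ((n:ℝ) * L) α η (eucNorm (w - xstar))
    (eucNorm (fun m => ∑ i, g i w m)) (dt (fun m => ∑ i, g i w m) (w - xstar))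
    (eucNorm (w - xstar - α • (fun m => ∑ i, g i w m)))
    (mul_pos hnpos hμ) (mul_pos hnpos (lt_of_lt_of_le hμ hμL))
    (mul_le_mul_of_nonneg_left hμL hnpos.le) (eucNorm_nonneg _) (eucNorm_nonneg _)
    (eucNorm_nonneg _) hA hB hα0 hηm hηM hT

end
noncomputable section

lemma le_of_sq_le_sq' {a b : ℝ} (ha : 0 ≤ a) (hb : 0 ≤ b) (h : a ^ 2 ≤ b ^ 2) :
    a ≤ b := by
  have h7 := Real.sqrt_le_sqrt h
  rwa [Real.sqrt_sq ha, Real.sqrt_sq hb] at h7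

lemma eucNorm_zero {ι : Type*} [Fintype ι] : eucNorm (0 : ι → ℝ) = 0 := by
  simp [eucNorm]

lemma eucNorm_pos {ι : Type*} [Fintype ι] {z : ι → ℝ} (hz : z ≠ 0) : 0 < eucNorm z := by
  rw [eucNorm_eq_norm]
  rw [norm_pos_iff]
  intro h
  exact hz (by simpa [ecast] using h)

lemma abs_le_eucNorm {ι : Type*} [Fintype ι] (z : ι → ℝ) (q : ι) : |z q| ≤ eucNorm z := by
  rw [eucNorm, ← Real.sqrt_sq_eq_abs]
  apply Real.sqrt_le_sqrt
  exact Finset.single_le_sum (f := fun i => z i ^ 2) (fun i _ => sq_nonneg _)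
    (Finset.mem_univ q)

lemma eucNorm_single {ι : Type*} [Fintype ι] [DecidableEq ι] (q : ι) :
    eucNorm (Pi.single q (1:ℝ)) = 1 := by
  have h : ∑ i, (Pi.single q (1:ℝ) : ι → ℝ) i ^ 2 = 1 := by
    simp [Pi.single_apply, ite_pow, Finset.sum_ite_eq']
  rw [eucNorm, h, Real.sqrt_one]

def frob {ι : Type*} [Fintype ι] (A : Matrix ι ι ℝ) : ℝ :=
  Real.sqrt (∑ q, ∑ r, (A q r) ^ 2)

lemma frob_nonneg {ι : Type*} [Fintype ι] (A : Matrix ι ι ℝ) : 0 ≤ frob A :=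
  Real.sqrt_nonneg _

lemma eucNorm_mulVec_le_frob {ι : Type*} [Fintype ι] (A : Matrix ι ι ℝ) (w : ι → ℝ) :
    eucNorm (A.mulVec w) ≤ frob A * eucNorm w := by
  apply le_of_sq_le_sq' (eucNorm_nonneg _)
    (mul_nonneg (frob_nonneg A) (eucNorm_nonneg w))
  rw [mul_pow, eucNorm_sq, eucNorm_sq]
  have hfr : frob A ^ 2 = ∑ q, ∑ r, (A q r) ^ 2 := Real.sq_sqrt (by positivity)
  rw [hfr]
  have hrow : ∀ q : ι, (A.mulVec w q) ^ 2 ≤ (∑ r, (A q r) ^ 2) * ∑ r, w r ^ 2 := by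
    intro q
    have : A.mulVec w q = ∑ r, A q r * w r := rfl
    rw [this]
    exact Finset.sum_mul_sq_le_sq_mul_sq Finset.univ _ _
  calc ∑ q, (A.mulVec w q) ^ 2
      ≤ ∑ q, ((∑ r, (A q r) ^ 2) * ∑ r, w r ^ 2) := Finset.sum_le_sum fun q _ => hrow q
    _ = (∑ q, ∑ r, (A q r) ^ 2) * ∑ r, w r ^ 2 := by rw [← Finset.sum_mul]

lemma specNorm_setNonempty {ι : Type*} [Fintype ι] (A : Matrix ι ι ℝ) :
    (0:ℝ) ∈ {c : ℝ | ∃ z : ι → ℝ, eucNorm z ≤ 1 ∧ c = eucNorm (A.mulVec z)} := by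
  refine ⟨0, by rw [eucNorm_zero]; norm_num, ?_⟩
  rw [Matrix.mulVec_zero, eucNorm_zero]

lemma specNorm_bddAbove {ι : Type*} [Fintype ι] (A : Matrix ι ι ℝ) :
    BddAbove {c : ℝ | ∃ z : ι → ℝ, eucNorm z ≤ 1 ∧ c = eucNorm (A.mulVec z)} := by
  refine ⟨frob A, fun c hc => ?_⟩
  obtain ⟨z, hz, rfl⟩ := hc
  calc eucNorm (A.mulVec z) ≤ frob A * eucNorm z := eucNorm_mulVec_le_frob A z
    _ ≤ frob A * 1 := mul_le_mul_of_nonneg_left hz (frob_nonneg A)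
    _ = frob A := mul_one _

lemma specNorm_nonneg {ι : Type*} [Fintype ι] (A : Matrix ι ι ℝ) : 0 ≤ specNorm A :=
  le_csSup (specNorm_bddAbove A) (specNorm_setNonempty A)

lemma specNorm_le {ι : Type*} [Fintype ι] (A : Matrix ι ι ℝ) (C : ℝ) (hC : 0 ≤ C)
    (h : ∀ z, eucNorm (A.mulVec z) ≤ C * eucNorm z) : specNorm A ≤ C := by
  apply csSup_le ⟨0, specNorm_setNonempty A⟩
  rintro c ⟨z, hz, rfl⟩
  calc eucNorm (A.mulVec z) ≤ C * eucNorm z := h z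
    _ ≤ C * 1 := mul_le_mul_of_nonneg_left hz hC
    _ = C := mul_one _

lemma le_specNorm {ι : Type*} [Fintype ι] (A : Matrix ι ι ℝ) (z : ι → ℝ) :
    eucNorm (A.mulVec z) ≤ specNorm A * eucNorm z := by
  rcases eq_or_ne z 0 with rfl | hz
  · simp [Matrix.mulVec_zero, eucNorm_zero]
  · have hpos := eucNorm_pos hz
    set u := (eucNorm z)⁻¹ • z with hu
    have hnu : eucNorm u = 1 := by
      rw [hu, eucNorm_smul, abs_of_pos (by positivity), inv_mul_cancel₀ hpos.ne']
    have hmem : eucNorm (A.mulVec u) ∈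
        {c : ℝ | ∃ z : ι → ℝ, eucNorm z ≤ 1 ∧ c = eucNorm (A.mulVec z)} :=
      ⟨u, le_of_eq hnu, rfl⟩
    have hle : eucNorm (A.mulVec u) ≤ specNorm A := le_csSup (specNorm_bddAbove A) hmem
    have hAu : A.mulVec u = (eucNorm z)⁻¹ • A.mulVec z := by
      rw [hu, Matrix.mulVec_smul]
    rw [hAu, eucNorm_smul, abs_of_pos (by positivity)] at hle
    calc eucNorm (A.mulVec z) = eucNorm z * ((eucNorm z)⁻¹ * eucNorm (A.mulVec z)) := by
          field_simp
      _ ≤ eucNorm z * specNorm A := mul_le_mul_of_nonneg_left hle hpos.le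
      _ = specNorm A * eucNorm z := mul_comm _ _

lemma specNorm_diag_le {ι : Type*} [Fintype ι] [DecidableEq ι] (d : ι → ℝ) (c : ℝ)
    (hc0 : 0 ≤ c) (hc : ∀ q, |d q| ≤ c) : specNorm (Matrix.diagonal d) ≤ c := by
  apply specNorm_le _ _ hc0
  intro z
  apply le_of_sq_le_sq' (eucNorm_nonneg _) (mul_nonneg hc0 (eucNorm_nonneg _))
  rw [mul_pow, eucNorm_sq, eucNorm_sq]
  rw [Finset.mul_sum]
  apply Finset.sum_le_sum
  intro q _
  rw [Matrix.mulVec_diagonal]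
  have h1 : (d q * z q) ^ 2 = (d q) ^ 2 * (z q) ^ 2 := by ring
  rw [h1]
  apply mul_le_mul_of_nonneg_right _ (sq_nonneg _)
  calc (d q) ^ 2 = |d q| ^ 2 := (sq_abs _).symm
    _ ≤ c ^ 2 := pow_le_pow_left₀ (abs_nonneg _) (hc q) 2

lemma diag_entry_le_specNorm {ι : Type*} [Fintype ι] [DecidableEq ι] (d : ι → ℝ) (q : ι) :
    |d q| ≤ specNorm (Matrix.diagonal d) := by
  have h1 : (Matrix.diagonal d).mulVec (Pi.single q 1) q = d q := by
    rw [Matrix.mulVec_single]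
    simp
  calc |d q| = |((Matrix.diagonal d).mulVec (Pi.single q 1)) q| := by rw [h1]
    _ ≤ eucNorm ((Matrix.diagonal d).mulVec (Pi.single q 1)) := abs_le_eucNorm _ _
    _ ≤ specNorm (Matrix.diagonal d) * eucNorm (Pi.single q 1) := le_specNorm _ _
    _ = specNorm (Matrix.diagonal d) := by rw [eucNorm_single, mul_one]

end
noncomputable section

lemma opNorm_mulVec_le {ι : Type*} [Fintype ι] (N : (ι → ℝ) → ℝ)
    (hdef : ∀ z, N z = 0 ↔ z = 0)
    (hge : ∀ z, eucNorm z ≤ N z)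
    (κ : ℝ) (hκ0 : 0 ≤ κ) (hκN : ∀ z, N z ≤ κ * eucNorm z)
    (A : Matrix ι ι ℝ) (z : ι → ℝ) :
    N (A.mulVec z) ≤ opNorm N A * N z := by
  have hN0 : ∀ w, 0 ≤ N w := fun w => le_trans (eucNorm_nonneg w) (hge w)
  have hNzero : N (0 : ι → ℝ) = 0 := (hdef 0).mpr rfl
  have hbdd : BddAbove {c : ℝ | ∃ w : ι → ℝ, w ≠ 0 ∧ c = N (A.mulVec w) / N w} := by
    refine ⟨κ * frob A, fun c hc => ?_⟩
    obtain ⟨w, hw, rfl⟩ := hc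
    have hNw : 0 < N w := by
      rcases (hN0 w).lt_or_eq with h | h
      · exact h
      · exact absurd ((hdef w).mp h.symm) hw
    rw [div_le_iff₀ hNw]
    calc N (A.mulVec w) ≤ κ * eucNorm (A.mulVec w) := hκN _
      _ ≤ κ * (frob A * eucNorm w) :=
          mul_le_mul_of_nonneg_left (eucNorm_mulVec_le_frob A w) hκ0
      _ = κ * frob A * eucNorm w := by ring
      _ ≤ κ * frob A * N w :=
          mul_le_mul_of_nonneg_left (hge w)
            (mul_nonneg hκ0 (frob_nonneg A))
  rcases eq_or_ne z 0 with rfl | hz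
  · rw [Matrix.mulVec_zero, hNzero, mul_zero]
  · have hNz : 0 < N z := by
      rcases (hN0 z).lt_or_eq with h | h
      · exact h
      · exact absurd ((hdef z).mp h.symm) hz
    have hmem : N (A.mulVec z) / N z ∈
        {c : ℝ | ∃ w : ι → ℝ, w ≠ 0 ∧ c = N (A.mulVec w) / N w} := ⟨z, hz, rfl⟩
    have hle : N (A.mulVec z) / N z ≤ opNorm N A := le_csSup hbdd hmem
    calc N (A.mulVec z) = N (A.mulVec z) / N z * N z := by field_simp
      _ ≤ opNorm N A * N z := mul_le_mul_of_nonneg_right hle hNz.le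

lemma opNorm_pow_mulVec_le {ι : Type*} [Fintype ι] [DecidableEq ι] (N : (ι → ℝ) → ℝ)
    (hdef : ∀ z, N z = 0 ↔ z = 0)
    (hge : ∀ z, eucNorm z ≤ N z)
    (κ : ℝ) (hκ0 : 0 ≤ κ) (hκN : ∀ z, N z ≤ κ * eucNorm z)
    (A : Matrix ι ι ℝ) (hσ0 : 0 ≤ opNorm N A) :
    ∀ (k : ℕ) (z : ι → ℝ), N ((A ^ k).mulVec z) ≤ (opNorm N A) ^ k * N z := by
  intro k
  induction k with
  | zero => intro z; simp [Matrix.one_mulVec]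
  | succ k ih =>
    intro z
    rw [pow_succ', ← Matrix.mulVec_mulVec]
    calc N (A.mulVec ((A ^ k).mulVec z))
        ≤ opNorm N A * N ((A ^ k).mulVec z) :=
          opNorm_mulVec_le N hdef hge κ hκ0 hκN A _
      _ ≤ opNorm N A * ((opNorm N A) ^ k * N z) :=
          mul_le_mul_of_nonneg_left (ih z) hσ0
      _ = (opNorm N A) ^ (k + 1) * N z := by rw [pow_succ']; ring

section KronFacts

variable (n p : ℕ) (Rb : Matrix (Fin n) (Fin n) ℝ) (π : Fin n → ℝ)

lemma RK_mul_Vinf (hrow : ∀ i, ∑ j, Rb i j = 1) :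
    RK n p Rb * VinfK n p π = VinfK n p π := by
  have h : Rb * (Matrix.of fun _ j => π j) = Matrix.of fun _ j => π j := by
    ext i j
    simp only [Matrix.mul_apply, Matrix.of_apply]
    rw [← Finset.sum_mul, hrow i, one_mul]
  rw [RK, VinfK, ← Matrix.mul_kronecker_mul, Matrix.one_mul, h]

lemma Vinf_mul_RK (hπstat : Matrix.vecMul π Rb = π) :
    VinfK n p π * RK n p Rb = VinfK n p π := by
  have h : (Matrix.of (fun _ j => π j) : Matrix (Fin n) (Fin n) ℝ) * Rb = Matrix.of (fun _ j => π j) := by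
    ext i j
    simp only [Matrix.mul_apply, Matrix.of_apply]
    have := congrFun hπstat j
    rw [Matrix.vecMul, dotProduct] at this
    exact this
  rw [RK, VinfK, ← Matrix.mul_kronecker_mul, Matrix.one_mul, h]

lemma Vinf_mul_Vinf (hπsum : ∑ i, π i = 1) :
    VinfK n p π * VinfK n p π = VinfK n p π := by
  have h : (Matrix.of (fun _ j => π j) : Matrix (Fin n) (Fin n) ℝ) * Matrix.of (fun _ j => π j)
      = Matrix.of (fun _ j => π j) := by
    ext i j
    simp only [Matrix.mul_apply, Matrix.of_apply]
    rw [← Finset.sum_mul, hπsum, one_mul]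
  rw [VinfK, ← Matrix.mul_kronecker_mul, Matrix.one_mul, h]

lemma VK_zero : VK n p Rb 0 = 1 := by
  rw [VK, pow_zero, Matrix.one_kronecker_one]

lemma VK_succ (k : ℕ) : VK n p Rb (k + 1) = RK n p Rb * VK n p Rb k := by
  rw [VK, VK, RK, ← Matrix.mul_kronecker_mul, Matrix.one_mul, ← pow_succ']

lemma Vinf_mul_VK (hπstat : Matrix.vecMul π Rb = π) (k : ℕ) :
    VinfK n p π * VK n p Rb k = VinfK n p π := by
  induction k with
  | zero => rw [VK_zero, Matrix.mul_one]
  | succ k ih =>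
    rw [VK_succ, ← Matrix.mul_assoc, Vinf_mul_RK n p Rb π hπstat, ih]

lemma RKpow_eq (hrow : ∀ i, ∑ j, Rb i j = 1) (hπstat : Matrix.vecMul π Rb = π)
    (hπsum : ∑ i, π i = 1) :
    ∀ k, 1 ≤ k → (RK n p Rb - VinfK n p π) ^ k = VK n p Rb k - VinfK n p π := by
  intro k hk
  induction k with
  | zero => omega
  | succ k ih =>
    rcases Nat.eq_or_lt_of_le hk with h1 | h1
    · -- k + 1 = 1
      have : k = 0 := by omega
      subst this
      rw [pow_one]
      have : VK n p Rb 1 = RK n p Rb := by rw [VK, pow_one, RK]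
      rw [this]
    · have hk1 : 1 ≤ k := by omega
      rw [pow_succ', ih hk1, Matrix.mul_sub, Matrix.sub_mul, Matrix.sub_mul,
        ← VK_succ, RK_mul_Vinf n p Rb π hrow, Vinf_mul_VK n p Rb π hπstat,
        Vinf_mul_Vinf n p π hπsum]
      abel

lemma Vinf_mulVec_apply (z : Fin n × Fin p → ℝ) (i : Fin n) (l : Fin p) :
    (VinfK n p π).mulVec z (i, l) = ∑ j, π j * z (j, l) := by
  rw [Matrix.mulVec, dotProduct]
  rw [Fintype.sum_prod_type]
  have : ∀ j : Fin n, ∑ m : Fin p, VinfK n p π (i, l) (j, m) * z (j, m)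
      = π j * z (j, l) := by
    intro j
    rw [VinfK]
    simp only [Matrix.kroneckerMap_apply, Matrix.of_apply, Matrix.one_apply]
    rw [Finset.sum_eq_single l]
    · simp
    · intro m _ hm; simp [Ne.symm hm]
    · intro h; exact absurd (Finset.mem_univ l) h
  exact Finset.sum_congr rfl fun j _ => this j

end KronFacts

end
noncomputable section

lemma eucNorm_neg {ι : Type*} [Fintype ι] (z : ι → ℝ) : eucNorm (-z) = eucNorm z := by
  rw [eucNorm_eq_norm, eucNorm_eq_norm]
  have : ecast (-z) = -ecast z := rfl
  rw [this, norm_neg]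

lemma ecast_sum {ι κ : Type*} [Fintype ι] [Fintype κ] (w : κ → ι → ℝ) :
    ecast (∑ j, w j) = ∑ j, ecast (w j) := by
  classical
  induction (Finset.univ : Finset κ) using Finset.induction_on with
  | empty => rfl
  | insert _ _ hj ih =>
      rw [Finset.sum_insert hj, Finset.sum_insert hj, ecast_add, ih]

lemma eucNorm_sum_le {ι κ : Type*} [Fintype ι] [Fintype κ] (w : κ → ι → ℝ) :
    eucNorm (∑ j, w j) ≤ ∑ j, eucNorm (w j) := by
  rw [eucNorm_eq_norm, ecast_sum]
  calc ‖∑ j, ecast (w j)‖ ≤ ∑ j, ‖ecast (w j)‖ := norm_sum_le _ _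
    _ = ∑ j, eucNorm (w j) := by
        exact Finset.sum_congr rfl fun j _ => (eucNorm_eq_norm (w j)).symm

lemma eucNorm_blockConst (n p : ℕ) (w : Fin p → ℝ) :
    eucNorm (fun q : Fin n × Fin p => w q.2) = Real.sqrt n * eucNorm w := by
  rw [eucNorm, eucNorm, ← Real.sqrt_mul (by positivity : (0:ℝ) ≤ n)]
  congr 1
  rw [Fintype.sum_prod_type]
  simp [Finset.sum_const, nsmul_eq_mul]

lemma eucNorm_prod_sq {n p : ℕ} (z : Fin n × Fin p → ℝ) :
    eucNorm z ^ 2 = ∑ j : Fin n, eucNorm (fun l => z (j, l)) ^ 2 := by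
  rw [eucNorm_sq, Fintype.sum_prod_type]
  exact Finset.sum_congr rfl fun j _ => (eucNorm_sq _).symm

lemma sum_le_sqrt_card_mul {n : ℕ} (a : Fin n → ℝ) (ha : ∀ j, 0 ≤ a j) :
    (∑ j, a j) ≤ Real.sqrt n * Real.sqrt (∑ j, a j ^ 2) := by
  apply le_of_sq_le_sq' (Finset.sum_nonneg fun j _ => ha j) (by positivity)
  have h1 := sq_sum_le_card_mul_sum_sq (s := (Finset.univ : Finset (Fin n))) (f := a)
  rw [mul_pow, Real.sq_sqrt (by positivity : (0:ℝ) ≤ (n:ℝ)),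
    Real.sq_sqrt (by positivity : (0:ℝ) ≤ ∑ j, a j ^ 2)]
  simpa [Finset.card_univ] using h1

end
/-- Lemma 7: if moreover `0 < α < 2/(nL)`, then for all `k ≥ 0`,
`‖x̂(k+1)−x*_vec‖ ≤ η‖x̂(k)−x*_vec‖ + αnL‖x(k)−x̂(k)‖_C + αvṽ²√n κ₃ σ_R^k ‖∇f(x(k))‖`,
with `η = max{|1−nLα|, |1−nμα|}`. -/
theorem stmt14 (n p : ℕ) (hn : 1 ≤ n) (hp : 1 ≤ p) (Rb : Matrix (Fin n) (Fin n) ℝ)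
    (hnonneg : ∀ i j, 0 ≤ Rb i j) (hrow : ∀ i, ∑ j, Rb i j = 1)
    (hdiag : ∀ i, 0 < Rb i i)
    (hirr : ∀ i j, ∃ k : ℕ, 0 < (Rb ^ k) i j)
    (π : Fin n → ℝ) (hπpos : ∀ i, 0 < π i) (hπsum : ∑ i, π i = 1)
    (hπstat : Matrix.vecMul π Rb = π)
    (f : Fin n → (Fin p → ℝ) → ℝ) (g : Fin n → (Fin p → ℝ) → Fin p → ℝ)
    (μ L : ℝ) (hμ : 0 < μ) (hμL : μ ≤ L)
    (hgrad : ∀ i, IsGradient (f i) (g i))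
    (hLip : ∀ i x x', eucNorm (g i x - g i x') ≤ L * eucNorm (x - x'))
    (hsc : ∀ i x x',
      f i x + (∑ j, g i x j * (x' j - x j)) + μ / 2 * eucNorm (x' - x) ^ 2 ≤ f i x')
    (xstar : Fin p → ℝ)
    (hmin : ∀ w, ∑ i, f i xstar ≤ ∑ i, f i w)
    (huniq : ∀ w, (∀ w', ∑ i, f i w ≤ ∑ i, f i w') → w = xstar)
    (NR NC : (Fin n × Fin p → ℝ) → ℝ)
    (hNRtri : ∀ z w, NR (z + w) ≤ NR z + NR w)
    (hNRhom : ∀ (a : ℝ) z, NR (a • z) = |a| * NR z)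
    (hNRdef : ∀ z, NR z = 0 ↔ z = 0)
    (hNCtri : ∀ z w, NC (z + w) ≤ NC z + NC w)
    (hNChom : ∀ (a : ℝ) z, NC (a • z) = |a| * NC z)
    (hNCdef : ∀ z, NC z = 0 ↔ z = 0)
    (hNRge : ∀ z, eucNorm z ≤ NR z) (hNCge : ∀ z, eucNorm z ≤ NC z)
    (κ₁ κ₂ κ₃ κ₄ : ℝ) (hκ₁ : 0 < κ₁) (hκ₂ : 0 < κ₂) (hκ₃ : 0 < κ₃) (hκ₄ : 0 < κ₄)
    (hκ₁R : ∀ z, NR z ≤ κ₁ * NC z) (hκ₂C : ∀ z, NC z ≤ κ₂ * NR z)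
    (hκ₃R : ∀ z, NR z ≤ κ₃ * eucNorm z) (hκ₄C : ∀ z, NC z ≤ κ₄ * eucNorm z)
    (v vt : ℝ) (hv : v = ⨆ k : ℕ, specNorm (VK n p Rb k))
    (hvt : vt = ⨆ k : ℕ, specNorm (VtinvK n p Rb k))
    (σR : ℝ) (hσRdef : σR = opNorm NR (RK n p Rb - VinfK n p π))
    (hσR0 : 0 < σR) (hσR1 : σR < 1)
    (α β : ℝ) (hα0 : 0 < α) (hβ0 : 0 < β) (hαβ : α * β < 1)
    (x y : ℕ → (Fin n × Fin p → ℝ)) (hy0 : y 0 = 0)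
    (hxrec : ∀ k, x (k + 1) =
      (RK n p Rb).mulVec (x k) - α • (y k + (VtinvK n p Rb k).mulVec (gradf g (x k))))
    (hyrec : ∀ k, y (k + 1) = y k + β • ((1 - RK n p Rb).mulVec (x (k + 1))))
    (hα2 : α < 2 / (n * L))
    (η : ℝ) (hη : η = max |1 - n * L * α| |1 - n * μ * α|) :
    ∀ k : ℕ,
      eucNorm ((VinfK n p π).mulVec (x (k + 1)) - starVec n p xstar) ≤
        η * eucNorm ((VinfK n p π).mulVec (x k) - starVec n p xstar)
          + α * n * L * NC (x k - (VinfK n p π).mulVec (x k))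
          + α * v * vt ^ 2 * Real.sqrt n * κ₃ * σR ^ k * eucNorm (gradf g (x k)) := by
  -- basic positivity facts
  have hLpos : 0 < L := lt_of_lt_of_le hμ hμL
  have hnRpos : (0:ℝ) < n := by
    have : (1:ℝ) ≤ n := by exact_mod_cast hn
    linarith
  have i0 : Fin n := ⟨0, hn⟩
  have l0 : Fin p := ⟨0, hp⟩
  have hκ₃1 : 1 ≤ κ₃ := by
    have h1 : eucNorm (Pi.single ((i0, l0) : Fin n × Fin p) (1:ℝ)) = 1 := eucNorm_single _
    have h2 := hNRge (Pi.single ((i0, l0) : Fin n × Fin p) (1:ℝ))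
    have h3 := hκ₃R (Pi.single ((i0, l0) : Fin n × Fin p) (1:ℝ))
    rw [h1] at h2 h3
    rw [mul_one] at h3
    linarith
  -- power bound in the R-norm
  have hσpow : ∀ (j : ℕ) (z : Fin n × Fin p → ℝ),
      NR (((RK n p Rb - VinfK n p π) ^ j).mulVec z) ≤ σR ^ j * NR z := by
    intro j z
    have h0 : 0 ≤ opNorm NR (RK n p Rb - VinfK n p π) := by rw [← hσRdef]; exact hσR0.le
    have := opNorm_pow_mulVec_le NR hNRdef hNRge κ₃ hκ₃.le hκ₃R
      (RK n p Rb - VinfK n p π) h0 j z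
    rwa [← hσRdef] at this
  have hVkVinf : ∀ j, 1 ≤ j → ∀ z : Fin n × Fin p → ℝ,
      eucNorm ((VK n p Rb j - VinfK n p π).mulVec z) ≤ κ₃ * σR ^ j * eucNorm z := by
    intro j hj z
    rw [← RKpow_eq n p Rb π hrow hπstat hπsum j hj]
    calc eucNorm (((RK n p Rb - VinfK n p π) ^ j).mulVec z)
        ≤ NR (((RK n p Rb - VinfK n p π) ^ j).mulVec z) := hNRge _
      _ ≤ σR ^ j * NR z := hσpow j z
      _ ≤ σR ^ j * (κ₃ * eucNorm z) :=
          mul_le_mul_of_nonneg_left (hκ₃R z) (pow_nonneg hσR0.le j)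
      _ = κ₃ * σR ^ j * eucNorm z := by ring
  have hπle1 : ∀ i, π i ≤ 1 := by
    intro i
    rw [← hπsum]
    exact Finset.single_le_sum (fun j _ => (hπpos j).le) (Finset.mem_univ i)
  -- diagonal entries of powers
  have hpow_nonneg : ∀ (j : ℕ) (a b : Fin n), 0 ≤ (Rb ^ j) a b := by
    intro j
    induction j with
    | zero =>
      intro a b
      rw [pow_zero]
      by_cases h : a = b
      · simp [Matrix.one_apply, h]
      · simp [Matrix.one_apply, h]
    | succ j ih =>
      intro a b
      rw [pow_succ', Matrix.mul_apply]
      exact Finset.sum_nonneg fun c _ => mul_nonneg (hnonneg a c) (ih c b)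
  have hdiagpow : ∀ (j : ℕ) (i : Fin n), 0 < (Rb ^ j) i i := by
    intro j i
    induction j with
    | zero => rw [pow_zero, Matrix.one_apply_eq]; norm_num
    | succ j ih =>
      rw [pow_succ', Matrix.mul_apply]
      have hterm : 0 < Rb i i * (Rb ^ j) i i := mul_pos (hdiag i) ih
      have hle : Rb i i * (Rb ^ j) i i ≤ ∑ c, Rb i c * (Rb ^ j) c i :=
        Finset.single_le_sum
          (f := fun c => Rb i c * (Rb ^ j) c i)
          (fun c _ => mul_nonneg (hnonneg i c) (hpow_nonneg j c i)) (Finset.mem_univ i)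
      linarith
  -- entrywise deviation bound
  have hentry : ∀ (j : ℕ) (i : Fin n), |(Rb ^ j) i i - π i| ≤ κ₃ * σR ^ j := by
    intro j i
    match j with
    | 0 =>
      rw [pow_zero, pow_zero, mul_one, Matrix.one_apply_eq]
      rw [abs_of_nonneg (by linarith [hπle1 i])]
      linarith [hπpos i]
    | (j + 1) =>
      have hv1 := hVkVinf (j + 1) (by omega) (Pi.single ((i, l0) : Fin n × Fin p) 1)
      have hval : ((VK n p Rb (j+1) - VinfK n p π).mulVec
          (Pi.single ((i, l0) : Fin n × Fin p) 1)) (i, l0)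
          = (Rb ^ (j+1)) i i - π i := by
        rw [Matrix.mulVec_single]
        simp [VK, VinfK, Matrix.sub_apply, Matrix.kroneckerMap_apply,
          Matrix.one_apply_eq]
      calc |(Rb ^ (j+1)) i i - π i|
          = |((VK n p Rb (j+1) - VinfK n p π).mulVec
              (Pi.single ((i, l0) : Fin n × Fin p) 1)) (i, l0)| := by rw [hval]
        _ ≤ eucNorm ((VK n p Rb (j+1) - VinfK n p π).mulVec
              (Pi.single ((i, l0) : Fin n × Fin p) 1)) := abs_le_eucNorm _ _
        _ ≤ κ₃ * σR ^ (j+1) * eucNorm (Pi.single ((i, l0) : Fin n × Fin p) (1:ℝ)) := hv1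
        _ = κ₃ * σR ^ (j+1) := by rw [eucNorm_single, mul_one]
  have hσRk_le1 : ∀ j : ℕ, σR ^ j ≤ 1 := fun j => pow_le_one₀ hσR0.le hσR1.le
  -- bound on specNorm of V(k), and on V_∞
  have hVkSpec : ∀ j, specNorm (VK n p Rb j) ≤ κ₃ + frob (VinfK n p π) := by
    intro j
    apply specNorm_le _ _ (by linarith [frob_nonneg (VinfK n p π), hκ₃])
    intro z
    rcases Nat.eq_zero_or_pos j with rfl | hj
    · rw [VK_zero, Matrix.one_mulVec]
      exact le_mul_of_one_le_left (eucNorm_nonneg z)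
        (by linarith [frob_nonneg (VinfK n p π)])
    · have hdec : (VK n p Rb j).mulVec z
          = ((VK n p Rb j) - VinfK n p π).mulVec z + (VinfK n p π).mulVec z := by
        rw [Matrix.sub_mulVec]; abel
      have h1 : κ₃ * σR ^ j ≤ κ₃ := mul_le_of_le_one_right hκ₃.le (hσRk_le1 j)
      calc eucNorm ((VK n p Rb j).mulVec z)
          ≤ eucNorm (((VK n p Rb j) - VinfK n p π).mulVec z)
            + eucNorm ((VinfK n p π).mulVec z) := by rw [hdec]; exact eucNorm_add_le _ _
        _ ≤ κ₃ * σR ^ j * eucNorm z + frob (VinfK n p π) * eucNorm z := by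
            have := hVkVinf j hj z
            have := eucNorm_mulVec_le_frob (VinfK n p π) z
            linarith
        _ ≤ (κ₃ + frob (VinfK n p π)) * eucNorm z := by
            have := mul_le_mul_of_nonneg_right h1 (eucNorm_nonneg z)
            linarith
  have hvge : ∀ j, specNorm (VK n p Rb j) ≤ v := by
    intro j
    rw [hv]
    exact le_ciSup ⟨κ₃ + frob (VinfK n p π), by rintro c ⟨j, rfl⟩; exact hVkSpec j⟩ j
  have hv0 : 0 ≤ v := le_trans (specNorm_nonneg _) (hvge 0)
  have hlim0 : Filter.Tendsto (fun j : ℕ => κ₃ * σR ^ j) atTop (nhds 0) := by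
    have h := tendsto_pow_atTop_nhds_zero_of_lt_one hσR0.le hσR1
    simpa using h.const_mul κ₃
  have hVinfB : ∀ z : Fin n × Fin p → ℝ,
      eucNorm ((VinfK n p π).mulVec z) ≤ v * eucNorm z := by
    intro z
    have hev : ∀ᶠ j in atTop,
        eucNorm ((VinfK n p π).mulVec z) ≤ κ₃ * σR ^ j * eucNorm z + v * eucNorm z := by
      rw [Filter.eventually_atTop]
      refine ⟨1, fun j hj => ?_⟩
      have hdec : (VinfK n p π).mulVec z
          = (VK n p Rb j).mulVec z + (-(((VK n p Rb j) - VinfK n p π).mulVec z)) := by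
        rw [Matrix.sub_mulVec]; abel
      calc eucNorm ((VinfK n p π).mulVec z)
          ≤ eucNorm ((VK n p Rb j).mulVec z)
            + eucNorm (-(((VK n p Rb j) - VinfK n p π).mulVec z)) := by
            rw [hdec]; exact eucNorm_add_le _ _
        _ ≤ v * eucNorm z + κ₃ * σR ^ j * eucNorm z := by
            rw [eucNorm_neg]
            have h1 := le_trans (le_specNorm (VK n p Rb j) z)
              (mul_le_mul_of_nonneg_right (hvge j) (eucNorm_nonneg z))
            have h2 := hVkVinf j hj z
            linarith
        _ = κ₃ * σR ^ j * eucNorm z + v * eucNorm z := by ring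
    have hlim : Filter.Tendsto (fun j : ℕ => κ₃ * σR ^ j * eucNorm z + v * eucNorm z)
        atTop (nhds (v * eucNorm z)) := by
      have h := (hlim0.mul_const (eucNorm z)).add_const (v * eucNorm z)
      simpa using h
    exact ge_of_tendsto hlim hev
  -- bounds for vt
  obtain ⟨im, _, hminπ⟩ :=
    Finset.exists_min_image (Finset.univ : Finset (Fin n)) π ⟨i0, Finset.mem_univ i0⟩
  have hc0 : 0 < π im := hπpos im
  obtain ⟨K, hK⟩ : ∃ K : ℕ, ∀ j ≥ K, κ₃ * σR ^ j < π im / 2 := by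
    have h := hlim0.eventually (gt_mem_nhds (show (0:ℝ) < π im / 2 by positivity))
    exact Filter.eventually_atTop.mp h
  have hvtub : ∀ j, specNorm (VtinvK n p Rb j)
      ≤ max ((π im / 2)⁻¹)
          ((Finset.range (K + 1)).sup' (by simp) fun j => specNorm (VtinvK n p Rb j)) := by
    intro j
    rcases le_or_gt j K with hjK | hjK
    · exact le_trans
        (Finset.le_sup' (f := fun j => specNorm (VtinvK n p Rb j))
          (Finset.mem_range.mpr (by omega))) (le_max_right _ _)
    · have htail : specNorm (VtinvK n p Rb j) ≤ (π im / 2)⁻¹ := by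
        rw [VtinvK]
        apply specNorm_diag_le _ _ (by positivity)
        rintro ⟨i, l⟩
        have ha := hdiagpow j i
        rw [abs_of_pos (inv_pos.mpr ha)]
        have hge2 : π im / 2 ≤ (Rb ^ j) i i := by
          have h1 := (abs_le.mp (hentry j i)).1
          have h2 := hK j (by omega)
          have h3 := hminπ i (Finset.mem_univ i)
          linarith
        exact inv_anti₀ (by positivity) hge2
      exact le_trans htail (le_max_left _ _)
  have hvtge : ∀ j, specNorm (VtinvK n p Rb j) ≤ vt := by
    intro j
    rw [hvt]
    exact le_ciSup ⟨_, by rintro c ⟨j, rfl⟩; exact hvtub j⟩ j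
  have hvt0 : 0 ≤ vt := le_trans (specNorm_nonneg _) (hvtge 0)
  have hdiaginv : ∀ (j : ℕ) (i : Fin n), ((Rb ^ j) i i)⁻¹ ≤ vt := by
    intro j i
    have h1 := diag_entry_le_specNorm
      (fun q : Fin n × Fin p => ((Rb ^ j) q.1 q.1)⁻¹) (i, l0)
    rw [abs_of_pos (inv_pos.mpr (hdiagpow j i))] at h1
    have h2 : specNorm (Matrix.diagonal fun q : Fin n × Fin p => ((Rb ^ j) q.1 q.1)⁻¹)
        = specNorm (VtinvK n p Rb j) := by rw [VtinvK]
    rw [h2] at h1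
    exact le_trans h1 (hvtge j)
  have hπinv : ∀ i, (π i)⁻¹ ≤ vt := by
    intro i
    have hto0 : Filter.Tendsto (fun j : ℕ => (Rb ^ j) i i - π i) atTop (nhds 0) :=
      squeeze_zero_norm (fun j => by
        simpa [Real.norm_eq_abs] using hentry j i) hlim0
    have hto : Filter.Tendsto (fun j : ℕ => (Rb ^ j) i i) atTop (nhds (π i)) := by
      have h := hto0.add_const (π i)
      simpa using h
    have hinv : Filter.Tendsto (fun j : ℕ => ((Rb ^ j) i i)⁻¹) atTop (nhds (π i)⁻¹) :=
      hto.inv₀ (hπpos i).ne'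
    exact le_of_tendsto hinv (Filter.Eventually.of_forall fun j => hdiaginv j i)
  -- gradient of the sum vanishes at the minimizer
  have hGz : ∀ m, ∑ i, g i xstar m = 0 := grad_sum_zero f g hgrad xstar hmin
  -- consensus dynamics
  have hyzero : ∀ j, (VinfK n p π).mulVec (y j) = 0 := by
    intro j
    induction j with
    | zero => rw [hy0, Matrix.mulVec_zero]
    | succ j ih =>
      rw [hyrec j, Matrix.mulVec_add, ih, Matrix.mulVec_smul, Matrix.mulVec_mulVec,
        Matrix.mul_sub, Matrix.mul_one, Vinf_mul_RK n p Rb π hπstat, sub_self,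
        Matrix.zero_mulVec, smul_zero, add_zero]
  intro k
  have hhat : (VinfK n p π).mulVec (x (k+1))
      = (VinfK n p π).mulVec (x k)
        - α • ((VinfK n p π * VtinvK n p Rb k).mulVec (gradf g (x k))) := by
    rw [hxrec k, Matrix.mulVec_sub, Matrix.mulVec_smul, Matrix.mulVec_add, hyzero k,
      Matrix.mulVec_mulVec, Matrix.mulVec_mulVec, Vinf_mul_RK n p Rb π hπstat, zero_add]
  -- the averaging matrix M = Vinf * Dpinv
  have hMapp : ∀ (z : Fin n × Fin p → ℝ) (i : Fin n) (l : Fin p),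
      ((VinfK n p π * Matrix.diagonal (fun q : Fin n × Fin p => (π q.1)⁻¹)).mulVec z) (i, l)
        = ∑ j, z (j, l) := by
    intro z i l
    rw [← Matrix.mulVec_mulVec, Vinf_mulVec_apply]
    refine Finset.sum_congr rfl fun j _ => ?_
    rw [Matrix.mulVec_diagonal, ← mul_assoc, mul_inv_cancel₀ (hπpos j).ne', one_mul]
  -- splitting
  have hsplit : (VinfK n p π).mulVec (x (k+1)) - starVec n p xstar
      = ((VinfK n p π).mulVec (x k) - starVec n p xstar
          - α • ((VinfK n p π * Matrix.diagonal (fun q : Fin n × Fin p => (π q.1)⁻¹)).mulVec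
              (gradf g ((VinfK n p π).mulVec (x k)))))
        + (-α) • ((VinfK n p π * Matrix.diagonal (fun q : Fin n × Fin p => (π q.1)⁻¹)).mulVec
            (gradf g (x k) - gradf g ((VinfK n p π).mulVec (x k))))
        + (-α) • (((VinfK n p π * VtinvK n p Rb k)
            - (VinfK n p π * Matrix.diagonal (fun q : Fin n × Fin p => (π q.1)⁻¹))).mulVec
            (gradf g (x k))) := by
    rw [hhat, Matrix.mulVec_sub, Matrix.sub_mulVec]
    module
  -- block structure
  have hxh : ∀ q : Fin n × Fin p,
      (VinfK n p π).mulVec (x k) q = (fun l => ∑ j, π j * x k (j, l)) q.2 := by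
    rintro ⟨i, l⟩
    exact Vinf_mulVec_apply n p π (x k) i l
  have hgradxh : gradf g ((VinfK n p π).mulVec (x k))
      = fun q : Fin n × Fin p => g q.1 (fun l => ∑ j, π j * x k (j, l)) q.2 := by
    funext q
    show g q.1 (fun j => (VinfK n p π).mulVec (x k) (q.1, j)) q.2 = _
    have h1 : (fun j => (VinfK n p π).mulVec (x k) (q.1, j))
        = fun l => ∑ j, π j * x k (j, l) := funext fun j => hxh (q.1, j)
    rw [h1]
  -- term 1
  have hT1eq : (VinfK n p π).mulVec (x k) - starVec n p xstar
      - α • ((VinfK n p π * Matrix.diagonal (fun q : Fin n × Fin p => (π q.1)⁻¹)).mulVec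
          (gradf g ((VinfK n p π).mulVec (x k))))
      = fun q : Fin n × Fin p =>
          ((fun l => ∑ j, π j * x k (j, l)) - xstar
            - α • (fun m => ∑ i, g i (fun l => ∑ j, π j * x k (j, l)) m)) q.2 := by
    funext q
    rcases q with ⟨i, l⟩
    have h1 := hMapp (gradf g ((VinfK n p π).mulVec (x k))) i l
    simp only [Pi.sub_apply, Pi.smul_apply, smul_eq_mul]
    rw [hxh (i, l), h1, hgradxh]
    simp [starVec]
  have hstarblock : (VinfK n p π).mulVec (x k) - starVec n p xstar
      = fun q : Fin n × Fin p => ((fun l => ∑ j, π j * x k (j, l)) - xstar) q.2 := by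
    funext q
    simp only [Pi.sub_apply]
    rw [hxh q]
    rfl
  have hT1b : eucNorm ((VinfK n p π).mulVec (x k) - starVec n p xstar
      - α • ((VinfK n p π * Matrix.diagonal (fun q : Fin n × Fin p => (π q.1)⁻¹)).mulVec
          (gradf g ((VinfK n p π).mulVec (x k)))))
      ≤ η * eucNorm ((VinfK n p π).mulVec (x k) - starVec n p xstar) := by
    rw [hT1eq, eucNorm_blockConst n p ((fun l => ∑ j, π j * x k (j, l)) - xstar
        - α • (fun m => ∑ i, g i (fun l => ∑ j, π j * x k (j, l)) m)), hstarblock,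
      eucNorm_blockConst n p ((fun l => ∑ j, π j * x k (j, l)) - xstar)]
    have hcontr := contraction hn f g μ L hμ hμL hgrad hLip hsc xstar hGz α η hα0 hη
      (fun l => ∑ j, π j * x k (j, l))
    calc Real.sqrt n * eucNorm ((fun l => ∑ j, π j * x k (j, l)) - xstar
          - α • fun m => ∑ i, g i (fun l => ∑ j, π j * x k (j, l)) m)
        ≤ Real.sqrt n * (η * eucNorm ((fun l => ∑ j, π j * x k (j, l)) - xstar)) :=
          mul_le_mul_of_nonneg_left hcontr (Real.sqrt_nonneg _)
      _ = η * (Real.sqrt n * eucNorm ((fun l => ∑ j, π j * x k (j, l)) - xstar)) := by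
          ring
  -- term 2
  have hT2b : eucNorm ((VinfK n p π * Matrix.diagonal
        (fun q : Fin n × Fin p => (π q.1)⁻¹)).mulVec
        (gradf g (x k) - gradf g ((VinfK n p π).mulVec (x k))))
      ≤ n * L * NC (x k - (VinfK n p π).mulVec (x k)) := by
    have hMu1 : (VinfK n p π * Matrix.diagonal
        (fun q : Fin n × Fin p => (π q.1)⁻¹)).mulVec
        (gradf g (x k) - gradf g ((VinfK n p π).mulVec (x k)))
        = fun q : Fin n × Fin p =>
            (fun l => ∑ j, (gradf g (x k) - gradf g ((VinfK n p π).mulVec (x k))) (j, l))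
              q.2 := by
      funext q
      rcases q with ⟨i, l⟩
      exact hMapp _ i l
    rw [hMu1, eucNorm_blockConst n p (fun l => ∑ j, (gradf g (x k)
        - gradf g ((VinfK n p π).mulVec (x k))) (j, l))]
    have hrowbound : ∀ j : Fin n,
        eucNorm (fun l => (gradf g (x k) - gradf g ((VinfK n p π).mulVec (x k))) (j, l))
          ≤ L * eucNorm (fun l => (x k - (VinfK n p π).mulVec (x k)) (j, l)) := by
      intro j
      have h1 : (fun l => (gradf g (x k) - gradf g ((VinfK n p π).mulVec (x k))) (j, l))
          = g j (fun l => x k (j, l)) - g j (fun l => ∑ j', π j' * x k (j', l)) := by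
        funext l
        simp only [Pi.sub_apply]
        rw [hgradxh]
        rfl
      have h2 : (fun l => (x k - (VinfK n p π).mulVec (x k)) (j, l))
          = (fun l => x k (j, l)) - (fun l => ∑ j', π j' * x k (j', l)) := by
        funext l
        simp only [Pi.sub_apply]
        rw [hxh (j, l)]
      rw [h1, h2]
      exact hLip j _ _
    have hsumrow : (fun l => ∑ j, (gradf g (x k)
          - gradf g ((VinfK n p π).mulVec (x k))) (j, l))
        = ∑ j, (fun l => (gradf g (x k) - gradf g ((VinfK n p π).mulVec (x k))) (j, l)) := by
      funext l
      rw [Finset.sum_apply]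
    have step1 : eucNorm (fun l => ∑ j, (gradf g (x k)
          - gradf g ((VinfK n p π).mulVec (x k))) (j, l))
        ≤ ∑ j, eucNorm (fun l => (gradf g (x k)
            - gradf g ((VinfK n p π).mulVec (x k))) (j, l)) := by
      rw [hsumrow]
      exact eucNorm_sum_le _
    have step2 : ∑ j, eucNorm (fun l => (gradf g (x k)
          - gradf g ((VinfK n p π).mulVec (x k))) (j, l))
        ≤ L * ∑ j, eucNorm (fun l => (x k - (VinfK n p π).mulVec (x k)) (j, l)) := by
      rw [Finset.mul_sum]
      exact Finset.sum_le_sum fun j _ => hrowbound j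
    have step3 : ∑ j, eucNorm (fun l => (x k - (VinfK n p π).mulVec (x k)) (j, l))
        ≤ Real.sqrt n * eucNorm (x k - (VinfK n p π).mulVec (x k)) := by
      have h1 := sum_le_sqrt_card_mul
        (fun j => eucNorm (fun l => (x k - (VinfK n p π).mulVec (x k)) (j, l)))
        (fun j => eucNorm_nonneg _)
      have h2 : ∑ j : Fin n, eucNorm
            (fun l => (x k - (VinfK n p π).mulVec (x k)) (j, l)) ^ 2
          = eucNorm (x k - (VinfK n p π).mulVec (x k)) ^ 2 :=
        (eucNorm_prod_sq _).symm
      rw [h2] at h1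
      rwa [Real.sqrt_sq (eucNorm_nonneg _)] at h1
    have hNCb := hNCge (x k - (VinfK n p π).mulVec (x k))
    have hsq : Real.sqrt n * Real.sqrt n = (n : ℝ) := Real.mul_self_sqrt (by positivity)
    calc Real.sqrt n * eucNorm (fun l => ∑ j, (gradf g (x k)
          - gradf g ((VinfK n p π).mulVec (x k))) (j, l))
        ≤ Real.sqrt n * (L * (Real.sqrt n
            * eucNorm (x k - (VinfK n p π).mulVec (x k)))) := by
          apply mul_le_mul_of_nonneg_left _ (Real.sqrt_nonneg _)
          calc eucNorm (fun l => ∑ j, (gradf g (x k)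
                - gradf g ((VinfK n p π).mulVec (x k))) (j, l))
              ≤ L * ∑ j, eucNorm (fun l => (x k
                  - (VinfK n p π).mulVec (x k)) (j, l)) := le_trans step1 step2
            _ ≤ L * (Real.sqrt n * eucNorm (x k - (VinfK n p π).mulVec (x k))) :=
                mul_le_mul_of_nonneg_left step3 hLpos.le
      _ = (Real.sqrt n * Real.sqrt n) * L
            * eucNorm (x k - (VinfK n p π).mulVec (x k)) := by ring
      _ = n * L * eucNorm (x k - (VinfK n p π).mulVec (x k)) := by rw [hsq]
      _ ≤ n * L * NC (x k - (VinfK n p π).mulVec (x k)) := by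
          apply mul_le_mul_of_nonneg_left hNCb
          positivity
  -- term 3
  have hWM : (VinfK n p π * VtinvK n p Rb k)
      - (VinfK n p π * Matrix.diagonal (fun q : Fin n × Fin p => (π q.1)⁻¹))
      = VinfK n p π * Matrix.diagonal
          (fun q : Fin n × Fin p => ((Rb ^ k) q.1 q.1)⁻¹ - (π q.1)⁻¹) := by
    rw [← Matrix.mul_sub]
    congr 1
    rw [VtinvK, Matrix.diagonal_sub]
  have hδ : ∀ q : Fin n × Fin p,
      |((Rb ^ k) q.1 q.1)⁻¹ - (π q.1)⁻¹| ≤ vt ^ 2 * κ₃ * σR ^ k := by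
    rintro ⟨i, l⟩
    have ha := hdiagpow k i
    have hb := hπpos i
    have hid : ((Rb ^ k) i i)⁻¹ - (π i)⁻¹
        = ((Rb ^ k) i i)⁻¹ * (π i - (Rb ^ k) i i) * (π i)⁻¹ := by
      field_simp
    show |((Rb ^ k) i i)⁻¹ - (π i)⁻¹| ≤ vt ^ 2 * κ₃ * σR ^ k
    rw [hid, abs_mul, abs_mul, abs_of_pos (inv_pos.mpr ha), abs_of_pos (inv_pos.mpr hb)]
    have h1 : ((Rb ^ k) i i)⁻¹ ≤ vt := hdiaginv k i
    have h2 : (π i)⁻¹ ≤ vt := hπinv i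
    have h3 : |π i - (Rb ^ k) i i| ≤ κ₃ * σR ^ k := by
      rw [abs_sub_comm]; exact hentry k i
    calc ((Rb ^ k) i i)⁻¹ * |π i - (Rb ^ k) i i| * (π i)⁻¹
        ≤ vt * |π i - (Rb ^ k) i i| * (π i)⁻¹ := by
          apply mul_le_mul_of_nonneg_right _ (inv_pos.mpr hb).le
          exact mul_le_mul_of_nonneg_right h1 (abs_nonneg _)
      _ ≤ vt * (κ₃ * σR ^ k) * (π i)⁻¹ := by
          apply mul_le_mul_of_nonneg_right _ (inv_pos.mpr hb).le
          exact mul_le_mul_of_nonneg_left h3 hvt0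
      _ ≤ vt * (κ₃ * σR ^ k) * vt := by
          apply mul_le_mul_of_nonneg_left h2
          have : 0 ≤ κ₃ * σR ^ k := by positivity
          exact mul_nonneg hvt0 this
      _ = vt ^ 2 * κ₃ * σR ^ k := by ring
  have hT3b : eucNorm ((((VinfK n p π * VtinvK n p Rb k)
        - (VinfK n p π * Matrix.diagonal (fun q : Fin n × Fin p => (π q.1)⁻¹)))).mulVec
        (gradf g (x k)))
      ≤ v * (vt ^ 2 * κ₃ * σR ^ k) * eucNorm (gradf g (x k)) := by
    rw [hWM, ← Matrix.mulVec_mulVec]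
    have hc0' : (0:ℝ) ≤ vt ^ 2 * κ₃ * σR ^ k := by positivity
    have hsd := specNorm_diag_le
      (fun q : Fin n × Fin p => ((Rb ^ k) q.1 q.1)⁻¹ - (π q.1)⁻¹)
      (vt ^ 2 * κ₃ * σR ^ k) hc0' hδ
    have hdiagb : eucNorm ((Matrix.diagonal
        (fun q : Fin n × Fin p => ((Rb ^ k) q.1 q.1)⁻¹ - (π q.1)⁻¹)).mulVec
        (gradf g (x k)))
        ≤ (vt ^ 2 * κ₃ * σR ^ k) * eucNorm (gradf g (x k)) :=
      le_trans (le_specNorm _ _)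
        (mul_le_mul_of_nonneg_right hsd (eucNorm_nonneg _))
    calc eucNorm ((VinfK n p π).mulVec ((Matrix.diagonal
          (fun q : Fin n × Fin p => ((Rb ^ k) q.1 q.1)⁻¹ - (π q.1)⁻¹)).mulVec
          (gradf g (x k))))
        ≤ v * eucNorm ((Matrix.diagonal
            (fun q : Fin n × Fin p => ((Rb ^ k) q.1 q.1)⁻¹ - (π q.1)⁻¹)).mulVec
            (gradf g (x k))) := hVinfB _
      _ ≤ v * ((vt ^ 2 * κ₃ * σR ^ k) * eucNorm (gradf g (x k))) :=
          mul_le_mul_of_nonneg_left hdiagb hv0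
      _ = v * (vt ^ 2 * κ₃ * σR ^ k) * eucNorm (gradf g (x k)) := by ring
  -- assemble
  have htri : eucNorm ((VinfK n p π).mulVec (x (k+1)) - starVec n p xstar)
      ≤ eucNorm ((VinfK n p π).mulVec (x k) - starVec n p xstar
          - α • ((VinfK n p π * Matrix.diagonal
              (fun q : Fin n × Fin p => (π q.1)⁻¹)).mulVec
              (gradf g ((VinfK n p π).mulVec (x k)))))
        + α * eucNorm ((VinfK n p π * Matrix.diagonal
            (fun q : Fin n × Fin p => (π q.1)⁻¹)).mulVec
            (gradf g (x k) - gradf g ((VinfK n p π).mulVec (x k))))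
        + α * eucNorm ((((VinfK n p π * VtinvK n p Rb k)
            - (VinfK n p π * Matrix.diagonal
                (fun q : Fin n × Fin p => (π q.1)⁻¹)))).mulVec (gradf g (x k))) := by
    rw [hsplit]
    have e1 := eucNorm_add_le
      (((VinfK n p π).mulVec (x k) - starVec n p xstar
          - α • ((VinfK n p π * Matrix.diagonal
              (fun q : Fin n × Fin p => (π q.1)⁻¹)).mulVec
              (gradf g ((VinfK n p π).mulVec (x k)))))
        + (-α) • ((VinfK n p π * Matrix.diagonal
            (fun q : Fin n × Fin p => (π q.1)⁻¹)).mulVec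
            (gradf g (x k) - gradf g ((VinfK n p π).mulVec (x k)))))
      ((-α) • (((VinfK n p π * VtinvK n p Rb k)
          - (VinfK n p π * Matrix.diagonal
              (fun q : Fin n × Fin p => (π q.1)⁻¹))).mulVec (gradf g (x k))))
    have e2 := eucNorm_add_le
      ((VinfK n p π).mulVec (x k) - starVec n p xstar
          - α • ((VinfK n p π * Matrix.diagonal
              (fun q : Fin n × Fin p => (π q.1)⁻¹)).mulVec
              (gradf g ((VinfK n p π).mulVec (x k)))))
      ((-α) • ((VinfK n p π * Matrix.diagonal
          (fun q : Fin n × Fin p => (π q.1)⁻¹)).mulVec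
          (gradf g (x k) - gradf g ((VinfK n p π).mulVec (x k)))))
    have e3 : ∀ w : Fin n × Fin p → ℝ, eucNorm ((-α) • w) = α * eucNorm w := by
      intro w
      rw [eucNorm_smul, abs_neg, abs_of_pos hα0]
    rw [e3] at e1
    rw [e3] at e2
    linarith [e1, e2]
  have hsqrtn : 1 ≤ Real.sqrt n := by
    rw [show (1:ℝ) = Real.sqrt 1 from Real.sqrt_one.symm]
    exact Real.sqrt_le_sqrt (by exact_mod_cast hn)
  have hfac : v * (vt ^ 2 * κ₃ * σR ^ k) * eucNorm (gradf g (x k))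
      ≤ v * vt ^ 2 * Real.sqrt n * κ₃ * σR ^ k * eucNorm (gradf g (x k)) := by
    have hnn : 0 ≤ v * vt ^ 2 * κ₃ * σR ^ k * eucNorm (gradf g (x k)) := by
      have h2 := eucNorm_nonneg (gradf g (x k))
      exact mul_nonneg (mul_nonneg (mul_nonneg (mul_nonneg hv0 (sq_nonneg vt)) hκ₃.le)
        (pow_nonneg hσR0.le k)) h2
    calc v * (vt ^ 2 * κ₃ * σR ^ k) * eucNorm (gradf g (x k))
        = (v * vt ^ 2 * κ₃ * σR ^ k * eucNorm (gradf g (x k))) * 1 := by ring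
      _ ≤ (v * vt ^ 2 * κ₃ * σR ^ k * eucNorm (gradf g (x k))) * Real.sqrt n :=
          mul_le_mul_of_nonneg_left hsqrtn hnn
      _ = v * vt ^ 2 * Real.sqrt n * κ₃ * σR ^ k * eucNorm (gradf g (x k)) := by ring
  have hm2 := mul_le_mul_of_nonneg_left hT2b hα0.le
  have hm3 := mul_le_mul_of_nonneg_left (le_trans hT3b hfac) hα0.le
  calc eucNorm ((VinfK n p π).mulVec (x (k+1)) - starVec n p xstar)
      ≤ _ := htri
    _ ≤ η * eucNorm ((VinfK n p π).mulVec (x k) - starVec n p xstar)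
          + α * (n * L * NC (x k - (VinfK n p π).mulVec (x k)))
          + α * (v * vt ^ 2 * Real.sqrt n * κ₃ * σR ^ k * eucNorm (gradf g (x k))) := by
        linarith [hT1b, hm2, hm3]
    _ = η * eucNorm ((VinfK n p π).mulVec (x k) - starVec n p xstar)
          + α * n * L * NC (x k - (VinfK n p π).mulVec (x k))
          + α * v * vt ^ 2 * Real.sqrt n * κ₃ * σR ^ k * eucNorm (gradf g (x k)) := by
        ring
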